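/- Let T < ∞ and suppose the control functions κᵖ and κᶜ are measurable and bounded on [0,T). If u is a solution of the relative guidance-by-repulsion equation on [0,T) with u(0) ≠ 0 and u(t) ≠ 0 for all t ∈ [0,T), then sup_{t ∈ [0,T)} |u(t)| < ∞ and inf_{t ∈ [0,T)} |u(t)| > 0; that is, the relative position can neither blow up to infinity nor hit the origin in finite time. -/

import Mathlib

open Real Filter MeasureTheory intervalIntegral
open scoped RealInnerProductSpace Topology

noncomputable section

/-- Perpendicular rotation in the plane: `(a, b)^⊥ = (-b, a)`. -/
def perp (w : EuclideanSpace ℝ (Fin 2)) : EuclideanSpace ℝ (Fin 2) :=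
  (WithLp.equiv 2 (Fin 2 → ℝ)).symm ![-(w 1), w 0]

/-- The relative guidance-by-repulsion equation
`u'' + (κᵖ(t) f_d(|u|) − f_e(|u|)) u + ν u' = κᶜ(t) u^⊥` holds at time `t`. -/
def SolvesRel (fd fe : ℝ → ℝ) (ν : ℝ) (κp κc : ℝ → ℝ)
    (u : ℝ → EuclideanSpace ℝ (Fin 2)) (t : ℝ) : Prop :=
  deriv (deriv u) t + (κp t * fd ‖u t‖ - fe ‖u t‖) • u t + ν • deriv u t
    = κc t • perp (u t)

lemma norm_perp (w : EuclideanSpace ℝ (Fin 2)) : ‖perp w‖ = ‖w‖ := by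
  simp only [perp, EuclideanSpace.norm_eq, WithLp.equiv_symm_apply, WithLp.ofLp_toLp,
    Fin.sum_univ_two, Matrix.cons_val_zero, Matrix.cons_val_one, Matrix.head_cons,
    Real.norm_eq_abs, sq_abs]
  ring_nf

lemma ftc_piece (g : ℝ → ℝ) (rp : ℝ) (hrp : 0 < rp) (hg : ContinuousOn g (Set.Ioi 0))
    (s : ℝ) (hs : 0 < s) :
    HasDerivAt (fun y => ∫ r in rp..y, g r) (g s) s := by
  have hsub : Set.uIcc rp s ⊆ Set.Ioi 0 := fun x hx =>
    lt_of_lt_of_le (lt_min hrp hs) hx.1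
  exact intervalIntegral.integral_hasDerivAt_right
    ((hg.mono hsub).intervalIntegrable)
    (hg.stronglyMeasurableAtFilter isOpen_Ioi s hs)
    (hg.continuousAt (Ioi_mem_nhds hs))

lemma div_piece (fe : ℝ → ℝ) (rp : ℝ) (hrp : 0 < rp)
    (hfe_cont : ContinuousOn (fun r => r * fe r) (Set.Ioi 0))
    (hfe_nonneg : ∀ r : ℝ, 0 < r → 0 ≤ fe r)
    (hfe_div : ¬ MeasureTheory.IntegrableOn (fun r => r * fe r) (Set.Ioc 0 rp))
    (B : ℝ) : ∃ s, 0 < s ∧ s ≤ rp ∧ B < ∫ r in s..rp, r * fe r := by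
  by_contra h
  push_neg at h
  apply hfe_div
  have hint : ∀ n : ℕ, IntegrableOn (fun r => r * fe r) (Set.Ioc (rp/(n+1)) rp) := by
    intro n
    have hpos : 0 < rp/(n+1) := by positivity
    have hsub : Set.Icc (rp/(n+1)) rp ⊆ Set.Ioi 0 := fun x hx => lt_of_lt_of_le hpos hx.1
    exact ((hfe_cont.mono hsub).integrableOn_Icc).mono_set Set.Ioc_subset_Icc_self
  refine MeasureTheory.integrableOn_Ioc_of_intervalIntegral_norm_bounded_left
    (I := B) (l := atTop) hint ?_ ?_
  · have h1 := (tendsto_const_div_atTop_nhds_zero_nat rp).comp (tendsto_add_atTop_nat 1)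
    have : (fun i : ℕ => rp / (↑i + 1)) = (fun n : ℕ => rp / ↑n) ∘ fun a => a + 1 := by
      funext i; simp [Function.comp]
    rw [this]; exact h1
  · refine Filter.Eventually.of_forall fun n => ?_
    have hpos : 0 < rp/(n+1) := by positivity
    have hle : rp/(n+1) ≤ rp := by
      rw [div_le_iff₀ (by positivity)]
      nlinarith [Nat.cast_nonneg (α := ℝ) n]
    have heq : ∫ x in Set.Ioc (rp/(n+1)) rp, ‖x * fe x‖ = ∫ r in (rp/(n+1))..rp, r * fe r := by
      rw [intervalIntegral.integral_of_le hle]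
      refine MeasureTheory.setIntegral_congr_fun measurableSet_Ioc fun x hx => ?_
      have hx0 : 0 < x := lt_of_lt_of_le hpos hx.1.le
      rw [Real.norm_eq_abs, abs_of_nonneg (mul_nonneg hx0.le (hfe_nonneg x hx0))]
    rw [heq]
    exact h _ hpos hle

theorem relative_state_no_finite_time_blowup_or_collision
    (fd fe : ℝ → ℝ) (rp γm : ℝ) (hrp : 0 < rp) (hγm : 0 < γm)
    (hfd_lip : LocallyLipschitzOn (Set.Ioi (0:ℝ)) fd)
    (hfe_lip : LocallyLipschitzOn (Set.Ioi (0:ℝ)) fe)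
    (hf_neg : ∀ r : ℝ, 0 < r → r < rp → fd r - fe r < 0)
    (hf_nonneg : ∀ r : ℝ, rp ≤ r → 0 ≤ fd r - fe r)
    (hf_deriv : 0 < deriv (fun r => fd r - fe r) rp)
    (hfd_nonneg : ∀ r : ℝ, 0 < r → 0 ≤ fd r)
    (hfd_bdd : ∃ C : ℝ, ∀ r : ℝ, 0 < r → fd r ≤ C)
    (hfd_lim : Filter.Tendsto fd Filter.atTop (nhds γm))
    (hfe_nonneg : ∀ r : ℝ, 0 < r → 0 ≤ fe r)
    (hfe_div : ¬ MeasureTheory.IntegrableOn (fun r => r * fe r) (Set.Ioc 0 rp))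
    (hfe_lim : Filter.Tendsto fe Filter.atTop (nhds 0))
    (ν : ℝ) (hν : 0 < ν) (T : ℝ)
    (κp κc : ℝ → ℝ) (hκp_meas : Measurable κp) (hκc_meas : Measurable κc)
    (hκ_bdd : ∃ C : ℝ, ∀ t ∈ Set.Ico (0:ℝ) T, |κp t| ≤ C ∧ |κc t| ≤ C)
    (u : ℝ → EuclideanSpace ℝ (Fin 2)) (hu : ContDiff ℝ 2 u)
    (hsol : ∀ t ∈ Set.Ico (0:ℝ) T, SolvesRel fd fe ν κp κc u t)
    (hu0 : u 0 ≠ 0) (hne : ∀ t ∈ Set.Ico (0:ℝ) T, u t ≠ 0) :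
    (∃ C : ℝ, ∀ t ∈ Set.Ico (0:ℝ) T, ‖u t‖ ≤ C) ∧
    (∃ c : ℝ, 0 < c ∧ ∀ t ∈ Set.Ico (0:ℝ) T, c ≤ ‖u t‖) := by
  by_cases hT : T ≤ 0
  · have hemp : Set.Ico (0:ℝ) T = ∅ := Set.Ico_eq_empty (by intro h; linarith)
    exact ⟨⟨0, by simp [hemp]⟩, ⟨1, one_pos, by simp [hemp]⟩⟩
  push_neg at hT
  obtain ⟨Cκ, hκ⟩ := hκ_bdd
  obtain ⟨Cfd, hCfd⟩ := hfd_bdd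
  have hCκ0 : 0 ≤ Cκ := le_trans (abs_nonneg _) (hκ 0 ⟨le_refl _, hT⟩).1
  have hCfd0 : 0 ≤ Cfd := le_trans (hfd_nonneg rp hrp) (hCfd rp hrp)
  -- regularity of u
  have hreg : Differentiable ℝ u ∧ Differentiable ℝ (deriv u) ∧ Continuous (deriv u) := by
    have h : ContDiff ℝ ((1:ℕ∞)+1) u := by exact_mod_cast hu
    rw [contDiff_succ_iff_deriv] at h
    exact ⟨h.1, h.2.2.differentiable (by norm_num), h.2.2.continuous⟩
  obtain ⟨hud, hud', hu'c⟩ := hreg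
  -- bounds on compact [0, T]
  obtain ⟨M, hM⟩ := isCompact_Icc.exists_bound_of_continuousOn
    (s := Set.Icc (0:ℝ) T) hud.continuous.continuousOn
  obtain ⟨M', hM'⟩ := isCompact_Icc.exists_bound_of_continuousOn
    (s := Set.Icc (0:ℝ) T) hu'c.continuousOn
  have hM0 : 0 ≤ M := le_trans (norm_nonneg _) (hM 0 ⟨le_refl _, hT.le⟩)
  have hM'0 : 0 ≤ M' := le_trans (norm_nonneg _) (hM' 0 ⟨le_refl _, hT.le⟩)
  refine ⟨⟨M, fun t ht => hM t ⟨ht.1, ht.2.le⟩⟩, ?_⟩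
  -- min on compact
  obtain ⟨t₀, ht₀, hmin⟩ := isCompact_Icc.exists_isMinOn (α := ℝ)
    ⟨0, ⟨le_refl _, hT.le⟩⟩ (hud.continuous.norm.continuousOn (s := Set.Icc (0:ℝ) T))
  rw [isMinOn_iff] at hmin
  by_cases hc : 0 < ‖u t₀‖
  · exact ⟨‖u t₀‖, hc, fun t ht => hmin t ⟨ht.1, ht.2.le⟩⟩
  exfalso
  push_neg at hc
  have huT : u T = 0 := by
    have h0 : u t₀ = 0 := by
      have := norm_nonneg (u t₀)
      have : ‖u t₀‖ = 0 := le_antisymm hc this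
      exact norm_eq_zero.mp this
    by_cases ht₀T : t₀ < T
    · exact absurd h0 (hne t₀ ⟨ht₀.1, ht₀T⟩)
    · push_neg at ht₀T
      have : t₀ = T := le_antisymm ht₀.2 ht₀T
      rwa [this] at h0
  -- setup energy
  set f : ℝ → ℝ := fun r => fd r - fe r with hfdef
  have hfd_cont : ContinuousOn fd (Set.Ioi (0:ℝ)) := hfd_lip.continuousOn
  have hfe_cont : ContinuousOn fe (Set.Ioi (0:ℝ)) := hfe_lip.continuousOn
  have hgf_cont : ContinuousOn (fun r => r * f r) (Set.Ioi (0:ℝ)) :=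
    continuousOn_id.mul (hfd_cont.sub hfe_cont)
  have hgd_cont : ContinuousOn (fun r => r * fd r) (Set.Ioi (0:ℝ)) :=
    continuousOn_id.mul hfd_cont
  have hge_cont : ContinuousOn (fun r => r * fe r) (Set.Ioi (0:ℝ)) :=
    continuousOn_id.mul hfe_cont
  set F : ℝ → ℝ := fun y => ∫ r in rp..y, r * f r with hFdef
  set E : ℝ → ℝ := fun s => (1/2) * ⟪deriv u s, deriv u s⟫ + F (Real.sqrt ⟪u s, u s⟫)
    with hEdef
  clear_value f F E
  -- derivative of energy
  have hE' : ∀ t ∈ Set.Ico (0:ℝ) T, HasDerivAt E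
      (⟪deriv u t, deriv (deriv u) t⟫ + f ‖u t‖ * ⟪u t, deriv u t⟫) t := by
    intro t ht
    have hnet : u t ≠ 0 := hne t ht
    have hnorm_pos : 0 < ‖u t‖ := norm_pos_iff.mpr hnet
    have h1 : HasDerivAt u (deriv u t) t := (hud t).hasDerivAt
    have h2 : HasDerivAt (deriv u) (deriv (deriv u) t) t := (hud' t).hasDerivAt
    have hkin : HasDerivAt (fun s => (1/2 : ℝ) * ⟪deriv u s, deriv u s⟫)
        (⟪deriv u t, deriv (deriv u) t⟫) t := by
      have := (h2.inner ℝ h2).const_mul (1/2 : ℝ)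
      refine this.congr_deriv ?_
      rw [real_inner_comm (deriv (deriv u) t) (deriv u t)]
      ring
    have hq : HasDerivAt (fun s => ⟪u s, u s⟫) (⟪u t, deriv u t⟫ + ⟪deriv u t, u t⟫) t :=
      h1.inner ℝ h1
    have hqpos : 0 < ⟪u t, u t⟫ := by
      rw [real_inner_self_eq_norm_mul_norm]; exact mul_pos hnorm_pos hnorm_pos
    have hsq : Real.sqrt ⟪u t, u t⟫ = ‖u t‖ := by
      rw [real_inner_self_eq_norm_mul_norm, Real.sqrt_mul_self (norm_nonneg _)]
    have hroot : HasDerivAt (fun s => Real.sqrt ⟪u s, u s⟫)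
        (1 / (2 * Real.sqrt ⟪u t, u t⟫) * (⟪u t, deriv u t⟫ + ⟪deriv u t, u t⟫)) t :=
      (Real.hasDerivAt_sqrt hqpos.ne').comp t hq
    have hFd : HasDerivAt F (‖u t‖ * f ‖u t‖) ‖u t‖ := by
      rw [hFdef]; exact ftc_piece _ rp hrp hgf_cont _ hnorm_pos
    have hFd' : HasDerivAt F (‖u t‖ * f ‖u t‖) (Real.sqrt ⟪u t, u t⟫) := by rw [hsq]; exact hFd
    have hcomp := hFd'.comp t hroot
    have hval : ‖u t‖ * f ‖u t‖ * (1 / (2 * Real.sqrt ⟪u t, u t⟫) *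
        (⟪u t, deriv u t⟫ + ⟪deriv u t, u t⟫)) = f ‖u t‖ * ⟪u t, deriv u t⟫ := by
      rw [hsq, real_inner_comm (deriv u t) (u t)]
      field_simp
      ring
    rw [hval] at hcomp
    rw [hEdef]
    exact hkin.add hcomp
  -- bound on derivative of energy
  set L : ℝ := Cκ * (M * M') + (1 + Cκ) * Cfd * (M * M') with hLdef
  have hL0 : 0 ≤ L := by positivity
  have hE'le : ∀ t ∈ Set.Ico (0:ℝ) T,
      ⟪deriv u t, deriv (deriv u) t⟫ + f ‖u t‖ * ⟪u t, deriv u t⟫ ≤ L := by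
    intro t ht
    have hnet : u t ≠ 0 := hne t ht
    have hnorm_pos : 0 < ‖u t‖ := norm_pos_iff.mpr hnet
    have hsolt := hsol t ht
    unfold SolvesRel at hsolt
    have hu'' : deriv (deriv u) t =
        κc t • perp (u t) - (κp t * fd ‖u t‖ - fe ‖u t‖) • u t - ν • deriv u t := by
      rw [eq_sub_iff_add_eq, eq_sub_iff_add_eq]; linear_combination (norm := module) hsolt
    have hinner : ⟪deriv u t, deriv (deriv u) t⟫ =
        κc t * ⟪deriv u t, perp (u t)⟫
        - (κp t * fd ‖u t‖ - fe ‖u t‖) * ⟪deriv u t, u t⟫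
        - ν * ⟪deriv u t, deriv u t⟫ := by
      rw [hu'']
      simp [inner_sub_right, inner_smul_right]
    have hbMM' : ‖u t‖ ≤ M := hM t ⟨ht.1, ht.2.le⟩
    have hbM' : ‖deriv u t‖ ≤ M' := hM' t ⟨ht.1, ht.2.le⟩
    have hκt := hκ t ht
    have hfdb : fd ‖u t‖ ≤ Cfd := hCfd _ hnorm_pos
    have hfd0 : 0 ≤ fd ‖u t‖ := hfd_nonneg _ hnorm_pos
    have hip : |⟪deriv u t, perp (u t)⟫| ≤ M' * M := by
      calc |⟪deriv u t, perp (u t)⟫| ≤ ‖deriv u t‖ * ‖perp (u t)‖ := abs_real_inner_le_norm _ _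
        _ = ‖deriv u t‖ * ‖u t‖ := by rw [norm_perp]
        _ ≤ M' * M := mul_le_mul hbM' hbMM' (norm_nonneg _) hM'0
    have hiu : |⟪u t, deriv u t⟫| ≤ M * M' := by
      calc |⟪u t, deriv u t⟫| ≤ ‖u t‖ * ‖deriv u t‖ := abs_real_inner_le_norm _ _
        _ ≤ M * M' := mul_le_mul hbMM' hbM' (norm_nonneg _) hM0
    have hself : 0 ≤ ⟪deriv u t, deriv u t⟫ := real_inner_self_nonneg
    have h1 : κc t * ⟪deriv u t, perp (u t)⟫ ≤ Cκ * (M * M') := by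
      calc κc t * ⟪deriv u t, perp (u t)⟫ ≤ |κc t * ⟪deriv u t, perp (u t)⟫| := le_abs_self _
        _ = |κc t| * |⟪deriv u t, perp (u t)⟫| := abs_mul _ _
        _ ≤ Cκ * (M' * M) := mul_le_mul hκt.2 hip (abs_nonneg _) hCκ0
        _ = Cκ * (M * M') := by ring
    have h2' : (1 - κp t) * fd ‖u t‖ * ⟪u t, deriv u t⟫ ≤ (1 + Cκ) * Cfd * (M * M') := by
      calc (1 - κp t) * fd ‖u t‖ * ⟪u t, deriv u t⟫
          ≤ |(1 - κp t) * fd ‖u t‖ * ⟪u t, deriv u t⟫| := le_abs_self _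
        _ = |1 - κp t| * |fd ‖u t‖| * |⟪u t, deriv u t⟫| := by rw [abs_mul, abs_mul]
        _ ≤ (1 + Cκ) * Cfd * (M * M') := by
            refine mul_le_mul (mul_le_mul ?_ ?_ (abs_nonneg _) (by linarith)) hiu
              (abs_nonneg _) (by positivity)
            · calc |1 - κp t| ≤ |(1:ℝ)| + |κp t| := abs_sub _ _
                _ ≤ 1 + Cκ := by rw [abs_one]; linarith [hκt.1]
            · rw [abs_of_nonneg hfd0]; exact hfdb
    have hEtotal : ⟪deriv u t, deriv (deriv u) t⟫ + f ‖u t‖ * ⟪u t, deriv u t⟫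
        = κc t * ⟪deriv u t, perp (u t)⟫ + (1 - κp t) * fd ‖u t‖ * ⟪u t, deriv u t⟫
          - ν * ⟪deriv u t, deriv u t⟫ := by
      rw [hinner, real_inner_comm (deriv u t) (u t)]
      simp only [hfdef]
      ring
    rw [hEtotal]
    linarith [h1, h2', mul_nonneg hν.le hself]
  -- energy growth bound
  have hEbound : ∀ t ∈ Set.Ico (0:ℝ) T, E t ≤ E 0 + L * t := by
    intro t ht
    rcases eq_or_lt_of_le ht.1 with h0 | h0
    · rw [← h0]; simp
    have hmono : MonotoneOn (fun s => E 0 + L * s - E s) (Set.Icc 0 t) := by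
      have hds : ∀ s ∈ Set.Icc (0:ℝ) t, HasDerivAt (fun s => E 0 + L * s - E s)
          (L - (⟪deriv u s, deriv (deriv u) s⟫ + f ‖u s‖ * ⟪u s, deriv u s⟫)) s := by
        intro s hs
        have hsT : s ∈ Set.Ico (0:ℝ) T := ⟨hs.1, lt_of_le_of_lt hs.2 ht.2⟩
        exact (((hasDerivAt_const s (E 0)).add ((hasDerivAt_id s).const_mul L)).sub
          (hE' s hsT)).congr_deriv (by ring)
      refine monotoneOn_of_deriv_nonneg (convex_Icc 0 t)
        (fun s hs => ((hds s hs).continuousAt.continuousWithinAt))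
        (fun s hs => (hds s (interior_subset hs)).differentiableAt.differentiableWithinAt)
        (fun s hs => ?_)
      have hs' : s ∈ Set.Icc (0:ℝ) t := interior_subset hs
      rw [(hds s hs').deriv]
      have hsT : s ∈ Set.Ico (0:ℝ) T := ⟨hs'.1, lt_of_le_of_lt hs'.2 ht.2⟩
      linarith [hE'le s hsT]
    have := hmono (Set.left_mem_Icc.mpr ht.1) (Set.right_mem_Icc.mpr ht.1) ht.1
    simp only [mul_zero, add_zero] at this
    linarith
  -- potential bounded
  set B : ℝ := E 0 + L * T with hBdef
  have hFbound : ∀ t ∈ Set.Ico (0:ℝ) T, F ‖u t‖ ≤ B := by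
    intro t ht
    have hnet : u t ≠ 0 := hne t ht
    have hsq : Real.sqrt ⟪u t, u t⟫ = ‖u t‖ := by
      rw [real_inner_self_eq_norm_mul_norm, Real.sqrt_mul_self (norm_nonneg _)]
    have hE := hEbound t ht
    have hself : (0:ℝ) ≤ (1/2) * ⟪deriv u t, deriv u t⟫ := by
      have : (0:ℝ) ≤ ⟪deriv u t, deriv u t⟫ := real_inner_self_nonneg
      linarith
    have hEt : E t = (1/2) * ⟪deriv u t, deriv u t⟫ + F ‖u t‖ := by
      simp only [hEdef, hsq]
    have hLt : L * t ≤ L * T := mul_le_mul_of_nonneg_left ht.2.le hL0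
    rw [hEt] at hE
    have hstep : F ‖u t‖ ≤ E 0 + L * t := le_trans (le_add_of_nonneg_left hself) hE
    rw [hBdef]
    linarith [hstep, hLt]
  -- lower bound for F
  set D : ℝ := Cfd * (rp^2 / 2) with hDdef
  have hFΦ : ∀ s : ℝ, 0 < s → s ≤ rp → (∫ r in s..rp, r * fe r) - D ≤ F s := by
    intro s hs0 hsrp
    have hsub : Set.uIcc s rp ⊆ Set.Ioi 0 := fun x hx =>
      lt_of_lt_of_le (lt_min hs0 hrp) hx.1
    have hid : IntervalIntegrable (fun r => r * fd r) volume s rp :=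
      (hgd_cont.mono hsub).intervalIntegrable
    have hie : IntervalIntegrable (fun r => r * fe r) volume s rp :=
      (hge_cont.mono hsub).intervalIntegrable
    have hF_eq : F s = (∫ r in s..rp, r * fe r) - ∫ r in s..rp, r * fd r := by
      simp only [hFdef]
      rw [intervalIntegral.integral_symm]
      have h : ∀ r ∈ Set.uIcc s rp, r * f r = r * fd r - r * fe r := fun r _ => by
        rw [hfdef]; ring
      rw [intervalIntegral.integral_congr h, intervalIntegral.integral_sub hid hie]
      ring
    have hmono : (∫ r in s..rp, r * fd r) ≤ ∫ r in s..rp, Cfd * r := by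
      refine intervalIntegral.integral_mono_on hsrp hid
        ((continuous_const.mul continuous_id).intervalIntegrable s rp) fun x hx => ?_
      have hx0 : 0 < x := lt_of_lt_of_le hs0 hx.1
      calc x * fd x ≤ x * Cfd := mul_le_mul_of_nonneg_left (hCfd x hx0) hx0.le
        _ = Cfd * x := mul_comm _ _
    have hval : (∫ r in s..rp, Cfd * r) ≤ D := by
      rw [intervalIntegral.integral_const_mul, integral_id, hDdef]
      nlinarith [sq_nonneg s]
    rw [hF_eq]
    linarith
  -- conclusion
  obtain ⟨s₁, hs₁0, hs₁rp, hs₁⟩ := div_piece fe rp hrp hge_cont hfe_nonneg hfe_div (B + D)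
  -- find t near T with small norm
  have htend : Tendsto (fun t => ‖u t‖) (𝓝[<] T) (𝓝 0) := by
    have h := (hud.continuous.norm.tendsto T).mono_left
      (nhdsWithin_le_nhds (s := Set.Iio T))
    rwa [huT, norm_zero] at h
  have hev : ∀ᶠ t in 𝓝[<] T, ‖u t‖ < s₁ :=
    htend (Iio_mem_nhds hs₁0)
  have hev2 : ∀ᶠ t in 𝓝[<] T, t ∈ Set.Ico (0:ℝ) T := by
    filter_upwards [Ioo_mem_nhdsLT_of_mem (Set.mem_Ioc.mpr ⟨hT, le_refl T⟩),
      self_mem_nhdsWithin] with t ht1 ht2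
    exact ⟨ht1.1.le, ht2⟩
  obtain ⟨t, hts, htT⟩ := (hev.and hev2).exists
  have hnet : u t ≠ 0 := hne t htT
  have hnorm_pos : 0 < ‖u t‖ := norm_pos_iff.mpr hnet
  have hΦmono : (∫ r in s₁..rp, r * fe r) ≤ ∫ r in ‖u t‖..rp, r * fe r := by
    have hsub1 : Set.uIcc ‖u t‖ s₁ ⊆ Set.Ioi 0 := fun x hx =>
      lt_of_lt_of_le (lt_min hnorm_pos hs₁0) hx.1
    have hsub2 : Set.uIcc s₁ rp ⊆ Set.Ioi 0 := fun x hx =>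
      lt_of_lt_of_le (lt_min hs₁0 hrp) hx.1
    have hi1 : IntervalIntegrable (fun r => r * fe r) volume ‖u t‖ s₁ :=
      (hge_cont.mono hsub1).intervalIntegrable
    have hi2 : IntervalIntegrable (fun r => r * fe r) volume s₁ rp :=
      (hge_cont.mono hsub2).intervalIntegrable
    have hadd := intervalIntegral.integral_add_adjacent_intervals hi1 hi2
    have hnn : (0:ℝ) ≤ ∫ r in ‖u t‖..s₁, r * fe r := by
      refine intervalIntegral.integral_nonneg hts.le fun x hx => ?_
      have hx0 : 0 < x := lt_of_lt_of_le hnorm_pos hx.1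
      exact mul_nonneg hx0.le (hfe_nonneg x hx0)
    linarith
  have hle_rp : ‖u t‖ ≤ rp := le_trans hts.le hs₁rp
  have := hFΦ ‖u t‖ hnorm_pos hle_rp
  have := hFbound t htT
  linarith
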